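/- For all ρ, x ∈ (0,∞), the functions u ↦ f_ρ(x,u) and u ↦ g_ρ(x,u) are integrable over ℝ and ∫_ℝ f_ρ(x,u) du = ∫_ℝ g_ρ(x,u) du. -/

import Mathlib

open Real MeasureTheory Filter Set

noncomputable section

/-- `S` is the (unique) solution of the ODE
`S'(u) = -8ρ S(u)^{1+ρ}/(1+S(u)^ρ)²` with `S(0) = x`, valued in `(0,∞)`. -/
def IsSsol (ρ x : ℝ) (S : ℝ → ℝ) : Prop :=
  (∀ u : ℝ, 0 < S u) ∧ S 0 = x ∧
    ∀ u : ℝ, HasDerivAt S (-(8 * ρ * S u ^ (1 + ρ)) / (1 + S u ^ ρ) ^ 2) u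

/-- `f_ρ(x,·)`, expressed in terms of the solution `S = S_ρ(x,·)`. -/
def fRho (ρ : ℝ) (S : ℝ → ℝ) (r : ℝ) : ℝ :=
  Real.exp (2 * ∫ u in (0:ℝ)..r, (1 - 2 * (1 + (1 - ρ) * S u ^ ρ) / (1 + S u ^ ρ) ^ 2))

/-- `g_ρ(x,·)`, expressed in terms of the solution `S = S_ρ(x,·)`. -/
def gRho (ρ x : ℝ) (S : ℝ → ℝ) (r : ℝ) : ℝ :=
  x * Real.exp (-2 * ∫ u in (0:ℝ)..r,
      (1 - 2 * ((1 - ρ) * S u ^ ρ + S u ^ (2 * ρ)) / (1 + S u ^ ρ) ^ 2))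

namespace Stmt12
def Y (ρ : ℝ) (S : ℝ → ℝ) (u : ℝ) : ℝ := S u ^ ρ
variable {ρ x : ℝ} {S : ℝ → ℝ}
lemma Ypos (hS : IsSsol ρ x S) (u : ℝ) : 0 < Y ρ S u :=
  Real.rpow_pos_of_pos (hS.1 u) ρ
lemma Yderiv (hρ : 0 < ρ) (hS : IsSsol ρ x S) (u : ℝ) :
    HasDerivAt (Y ρ S) (-(8 * ρ^2 * (Y ρ S u)^2) / (1 + Y ρ S u)^2) u := by
  have hpos := hS.1 u
  have h := (hS.2.2 u).rpow_const (p := ρ) (Or.inl hpos.ne')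
  refine h.congr_deriv (Eq.symm ?_)
  have hden : (0:ℝ) < (1 + S u ^ ρ)^2 := by positivity
  have h1 : S u ^ (1 + ρ) * S u ^ (ρ - 1) = S u ^ ρ * S u ^ ρ := by
    rw [← Real.rpow_add hpos, ← Real.rpow_add hpos]; ring_nf
  show -(8 * ρ^2 * (S u ^ ρ)^2) / (1 + S u ^ ρ)^2 = _
  field_simp
  nlinarith [h1]


lemma Ycont (hρ : 0 < ρ) (hS : IsSsol ρ x S) : Continuous (Y ρ S) :=
  continuous_iff_continuousAt.2 fun u => (Yderiv hρ hS u).continuousAt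

lemma Yanti (hρ : 0 < ρ) (hS : IsSsol ρ x S) : StrictAnti (Y ρ S) := by
  apply strictAnti_of_deriv_neg
  intro u
  rw [(Yderiv hρ hS u).deriv]
  have h1 := Ypos hS u
  have h2 : (0:ℝ) < 1 + Y ρ S u := by linarith
  apply div_neg_of_neg_of_pos
  · have : 0 < 8 * ρ ^ 2 * Y ρ S u ^ 2 := by positivity
    linarith
  · positivity

lemma Yzero (hS : IsSsol ρ x S) : Y ρ S 0 = x ^ ρ := by
  unfold Y; rw [hS.2.1]

-- growth bound for u ≤ 0 : Y u ≥ x^ρ + c₂ * (-u)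
lemma Ylower (hρ : 0 < ρ) (hx : 0 < x) (hS : IsSsol ρ x S) {u : ℝ} (hu : u ≤ 0) :
    x ^ ρ + (8 * ρ^2 * (x^ρ)^2 / (1 + x^ρ)^2) * (-u) ≤ Y ρ S u := by
  set c := 8 * ρ^2 * (x^ρ)^2 / (1 + x^ρ)^2 with hc
  have hxρ : (0:ℝ) < x ^ ρ := Real.rpow_pos_of_pos hx ρ
  -- k(u) = Y u + c * u is antitone on Iic 0
  have hanti : AntitoneOn (fun u => Y ρ S u + c * u) (Iic 0) := by
    apply antitoneOn_of_deriv_nonpos (convex_Iic 0)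
    · exact ((Ycont hρ hS).add (continuous_const.mul continuous_id)).continuousOn
    · intro v hv
      exact ((Yderiv hρ hS v).differentiableAt.add
        ((differentiableAt_id.const_mul c))).differentiableWithinAt
    · intro v hv
      rw [interior_Iic] at hv
      have hd : HasDerivAt (fun u => Y ρ S u + c * u)
          (-(8 * ρ^2 * (Y ρ S v)^2) / (1 + Y ρ S v)^2 + c) v := by
        exact ((Yderiv hρ hS v).add ((hasDerivAt_id v).const_mul c)).congr_deriv (by simp)
      rw [hd.deriv]
      -- need: c ≤ 8ρ²Yv²/(1+Yv)², using Y v ≥ x^ρ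
      have hYv : x ^ ρ ≤ Y ρ S v := by
        have := (Yanti hρ hS).antitone (le_of_lt hv)
        rw [Yzero hS] at this; exact this
      have hYpos := Ypos hS v
      have key : c ≤ 8 * ρ^2 * (Y ρ S v)^2 / (1 + Y ρ S v)^2 := by
        rw [hc, div_le_div_iff₀ (by positivity) (by positivity)]
        have h3 : 0 ≤ (Y ρ S v - x ^ ρ) * (Y ρ S v + x ^ ρ + 2 * (Y ρ S v) * x ^ ρ) := by
          apply mul_nonneg (by linarith) (by positivity)
        nlinarith [mul_nonneg h3 (sq_nonneg ρ)]
      rw [neg_div]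
      linarith
  have := hanti (show u ∈ Iic 0 from hu) (show (0:ℝ) ∈ Iic 0 from Set.mem_Iic.2 le_rfl) hu
  simp only [mul_zero, add_zero, Yzero hS] at this
  linarith

lemma Yupper (hρ : 0 < ρ) (hS : IsSsol ρ x S) {u : ℝ} (hu : 0 ≤ u) :
    Y ρ S u ≤ x ^ ρ := by
  have := (Yanti hρ hS).antitone hu
  rwa [Yzero hS] at this

lemma Yinv_lower (hρ : 0 < ρ) (hx : 0 < x) (hS : IsSsol ρ x S) {u : ℝ} (hu : 0 ≤ u) :
    (x ^ ρ)⁻¹ + (8 * ρ^2 / (1 + x^ρ)^2) * u ≤ (Y ρ S u)⁻¹ := by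
  set c := 8 * ρ^2 / (1 + x^ρ)^2 with hc
  have hxρ : (0:ℝ) < x ^ ρ := Real.rpow_pos_of_pos hx ρ
  have hd : ∀ v : ℝ, HasDerivAt (fun u => (Y ρ S u)⁻¹ - c * u)
      (8 * ρ^2 / (1 + Y ρ S v)^2 - c) v := by
    intro v
    have hYv := Ypos hS v
    have h0 := (Yderiv hρ hS v).inv hYv.ne'
    have h1 := h0.sub ((hasDerivAt_id v).const_mul c)
    refine h1.congr_deriv (Eq.symm ?_)
    field_simp
  have hmono : MonotoneOn (fun u => (Y ρ S u)⁻¹ - c * u) (Ici 0) := by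
    apply monotoneOn_of_deriv_nonneg (convex_Ici 0)
    · exact fun v _ => ((hd v).continuousAt).continuousWithinAt
    · exact fun v _ => ((hd v).differentiableAt).differentiableWithinAt
    · intro v hv
      rw [interior_Ici] at hv
      rw [(hd v).deriv]
      have hYv := Ypos hS v
      have hYle : Y ρ S v ≤ x ^ ρ := Yupper hρ hS (le_of_lt hv)
      have : c ≤ 8 * ρ^2 / (1 + Y ρ S v)^2 := by
        rw [hc]
        apply div_le_div_of_nonneg_left (by positivity) (by positivity)
        nlinarith
      linarith
  have := hmono (Set.mem_Ici.2 le_rfl) (Set.mem_Ici.2 hu) hu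
  simp only [mul_zero, sub_zero, Yzero hS] at this
  linarith

lemma Ytop (hρ : 0 < ρ) (hx : 0 < x) (hS : IsSsol ρ x S) :
    Tendsto (Y ρ S) atTop (nhds 0) := by
  have hxρ : (0:ℝ) < x ^ ρ := Real.rpow_pos_of_pos hx ρ
  have hc : (0:ℝ) < 8 * ρ^2 / (1 + x^ρ)^2 := by positivity
  have hbnd : ∀ᶠ u in atTop, Y ρ S u ≤ ((x ^ ρ)⁻¹ + (8 * ρ^2 / (1 + x^ρ)^2) * u)⁻¹ := by
    filter_upwards [eventually_ge_atTop (0:ℝ)] with u hu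
    have h1 := Yinv_lower hρ hx hS hu
    have h2 : (0:ℝ) < (x ^ ρ)⁻¹ + (8 * ρ^2 / (1 + x^ρ)^2) * u := by positivity
    calc Y ρ S u = ((Y ρ S u)⁻¹)⁻¹ := (inv_inv _).symm
    _ ≤ ((x ^ ρ)⁻¹ + (8 * ρ^2 / (1 + x^ρ)^2) * u)⁻¹ := by
        apply inv_anti₀ h2 h1
  have hlim : Tendsto (fun u : ℝ => ((x ^ ρ)⁻¹ + (8 * ρ^2 / (1 + x^ρ)^2) * u)⁻¹) atTop (nhds 0) := by
    apply Tendsto.inv_tendsto_atTop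
    apply tendsto_atTop_add_const_left
    exact (tendsto_const_mul_atTop_of_pos hc).2 tendsto_id
  have h0 : ∀ u : ℝ, 0 ≤ Y ρ S u := fun u => (Ypos hS u).le
  exact tendsto_of_tendsto_of_tendsto_of_le_of_le' tendsto_const_nhds hlim
    (Eventually.of_forall h0) hbnd

lemma Ybot (hρ : 0 < ρ) (hx : 0 < x) (hS : IsSsol ρ x S) :
    Tendsto (Y ρ S) atBot atTop := by
  have hxρ : (0:ℝ) < x ^ ρ := Real.rpow_pos_of_pos hx ρ
  have hc : (0:ℝ) < 8 * ρ^2 * (x^ρ)^2 / (1 + x^ρ)^2 := by positivity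
  apply tendsto_atTop_mono' atBot
    (show ∀ᶠ u in atBot, x ^ ρ + (8 * ρ^2 * (x^ρ)^2 / (1 + x^ρ)^2) * (-u) ≤ Y ρ S u by
      filter_upwards [eventually_le_atBot (0:ℝ)] with u hu
      exact Ylower hρ hx hS hu)
  apply tendsto_atTop_add_const_left
  exact (tendsto_const_mul_atTop_of_pos hc).2 tendsto_neg_atBot_atTop

lemma Yrange (hρ : 0 < ρ) (hx : 0 < x) (hS : IsSsol ρ x S) :
    Y ρ S '' univ = Ioi 0 := by
  apply Subset.antisymm
  · rintro t ⟨u, -, rfl⟩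
    exact Ypos hS u
  · intro t ht
    obtain ⟨a, ha⟩ : ∃ a, Y ρ S a < t :=
      ((Ytop hρ hx hS).eventually (eventually_lt_nhds ht)).exists
    obtain ⟨b, hb⟩ : ∃ b, t < Y ρ S b :=
      ((Ybot hρ hx hS).eventually (eventually_gt_atTop t)).exists
    have hsub := intermediate_value_uIcc (a := b) (b := a)
      ((Ycont hρ hS).continuousOn)
    have htmem : t ∈ uIcc (Y ρ S b) (Y ρ S a) :=
      Set.mem_uIcc.2 (Or.inr ⟨ha.le, hb.le⟩)
    obtain ⟨u, -, hu⟩ := hsub htmem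
    exact ⟨u, mem_univ u, hu⟩

def Fk (ρ t : ℝ) : ℝ := t ^ (-(1/(2*ρ))) * Real.exp (-(t + 1/t)/(4*ρ^2))
def Gk (ρ t : ℝ) : ℝ := t ^ (1/(2*ρ)) * Real.exp (-(t + 1/t)/(4*ρ^2))

lemma Fk_pos {ρ t : ℝ} (ht : 0 < t) : 0 < Fk ρ t :=
  mul_pos (Real.rpow_pos_of_pos ht _) (Real.exp_pos _)

lemma Gk_pos {ρ t : ℝ} (ht : 0 < t) : 0 < Gk ρ t :=
  mul_pos (Real.rpow_pos_of_pos ht _) (Real.exp_pos _)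

lemma contS (hS : IsSsol ρ x S) : Continuous S :=
  continuous_iff_continuousAt.2 fun u => (hS.2.2 u).continuousAt

lemma den_ne (hS : IsSsol ρ x S) (u : ℝ) : (1 + S u ^ ρ)^2 ≠ 0 := by
  have := Ypos hS u
  unfold Y at this
  positivity

lemma contbF (hρ : 0 < ρ) (hS : IsSsol ρ x S) :
    Continuous (fun u => 1 - 2 * (1 + (1 - ρ) * S u ^ ρ) / (1 + S u ^ ρ) ^ 2) := by
  have hY : Continuous (Y ρ S) := Ycont hρ hS
  have h1 : Continuous fun u => 2 * (1 + (1 - ρ) * S u ^ ρ) := by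
    simp only [show ∀ u, S u ^ ρ = Y ρ S u from fun u => rfl]
    fun_prop
  have h2 : Continuous fun u => (1 + S u ^ ρ)^2 := by
    simp only [show ∀ u, S u ^ ρ = Y ρ S u from fun u => rfl]
    fun_prop
  exact continuous_const.sub (h1.div h2 (den_ne hS))

lemma sq_rpow (hS : IsSsol ρ x S) (u : ℝ) : S u ^ (2*ρ) = (Y ρ S u)^2 := by
  unfold Y
  rw [show (2:ℝ)*ρ = ρ+ρ by ring, Real.rpow_add (hS.1 u), sq]

lemma contbG (hρ : 0 < ρ) (hS : IsSsol ρ x S) :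
    Continuous (fun u => 1 - 2 * ((1 - ρ) * S u ^ ρ + S u ^ (2*ρ)) / (1 + S u ^ ρ) ^ 2) := by
  have hY : Continuous (Y ρ S) := Ycont hρ hS
  have h1 : Continuous fun u => 2 * ((1 - ρ) * S u ^ ρ + S u ^ (2*ρ)) := by
    simp only [sq_rpow hS, show ∀ u, S u ^ ρ = Y ρ S u from fun u => rfl]
    fun_prop
  have h2 : Continuous fun u => (1 + S u ^ ρ)^2 := by
    simp only [show ∀ u, S u ^ ρ = Y ρ S u from fun u => rfl]
    fun_prop
  exact continuous_const.sub (h1.div h2 (den_ne hS))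


/-- closed form for fRho -/
lemma fRho_eq (hρ : 0 < ρ) (hx : 0 < x) (hS : IsSsol ρ x S) (r : ℝ) :
    fRho ρ S r = Fk ρ (Y ρ S r) / Fk ρ (x ^ ρ) := by
  set b : ℝ → ℝ := fun u => 1 - 2 * (1 + (1 - ρ) * S u ^ ρ) / (1 + S u ^ ρ) ^ 2 with hb
  have hΦ : ∀ r : ℝ, HasDerivAt (fun r => ∫ u in (0:ℝ)..r, b u) (b r) r := fun r =>
    ((contbF hρ hS).integral_hasStrictDerivAt 0 r).hasDerivAt
  set ψ : ℝ → ℝ := fun u => -(1/(2*ρ)) * Real.log (Y ρ S u) - (Y ρ S u + (Y ρ S u)⁻¹)/(4*ρ^2)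
    with hψdef
  have hψ : ∀ u : ℝ, HasDerivAt ψ (2 * b u) u := by
    intro u
    have hYpos := Ypos hS u
    have hlog := (Yderiv hρ hS u).log hYpos.ne'
    have hinv := (Yderiv hρ hS u).inv hYpos.ne'
    have hd := (hlog.const_mul (-(1/(2*ρ)))).sub (((Yderiv hρ hS u).add hinv).div_const (4*ρ^2))
    refine hd.congr_deriv (Eq.symm ?_)
    rw [hb]
    show 2 * (1 - 2 * (1 + (1 - ρ) * Y ρ S u) / (1 + Y ρ S u) ^ 2) = _
    have h1 : (0:ℝ) < 1 + Y ρ S u := by linarith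
    field_simp
    ring
  have hconst : ∀ r : ℝ, 2 * (∫ u in (0:ℝ)..r, b u) - ψ r = 0 - ψ 0 := by
    intro r
    have hD : ∀ u : ℝ, HasDerivAt (fun r => 2 * (∫ u in (0:ℝ)..r, b u) - ψ r) 0 u := by
      intro u
      have := ((hΦ u).const_mul 2).sub (hψ u)
      exact this.congr_deriv (by simp)
    have := is_const_of_deriv_eq_zero (fun u => (hD u).differentiableAt)
      (fun u => (hD u).deriv) r 0
    simpa [intervalIntegral.integral_same] using this
  have hexp : ∀ u : ℝ, Real.exp (ψ u) = Fk ρ (Y ρ S u) := by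
    intro u
    have hYpos := Ypos hS u
    rw [Fk]
    show Real.exp (-(1/(2*ρ)) * Real.log (Y ρ S u) - (Y ρ S u + (Y ρ S u)⁻¹)/(4*ρ^2)) = _
    rw [sub_eq_add_neg, Real.exp_add, Real.rpow_def_of_pos hYpos]
    congr 1
    · rw [mul_comm]
    · rw [one_div]
      ring_nf
  have h2 : 2 * (∫ u in (0:ℝ)..r, b u) = ψ r - ψ 0 := by
    have := hconst r; linarith
  rw [fRho]
  show Real.exp (2 * ∫ u in (0:ℝ)..r, b u) = _
  rw [h2, Real.exp_sub, hexp, hexp, Yzero hS]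

lemma gRho_eq_mul (hρ : 0 < ρ) (hx : 0 < x) (hS : IsSsol ρ x S) (r : ℝ) :
    gRho ρ x S r = S r * fRho ρ S r := by
  set b : ℝ → ℝ := fun u => 1 - 2 * (1 + (1 - ρ) * S u ^ ρ) / (1 + S u ^ ρ) ^ 2 with hb
  set c : ℝ → ℝ := fun u => 1 - 2 * ((1 - ρ) * S u ^ ρ + S u ^ (2*ρ)) / (1 + S u ^ ρ) ^ 2 with hc
  have hΦb : ∀ r : ℝ, HasDerivAt (fun r => ∫ u in (0:ℝ)..r, b u) (b r) r := fun r =>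
    ((contbF hρ hS).integral_hasStrictDerivAt 0 r).hasDerivAt
  have hΦc : ∀ r : ℝ, HasDerivAt (fun r => ∫ u in (0:ℝ)..r, c u) (c r) r := fun r =>
    ((contbG hρ hS).integral_hasStrictDerivAt 0 r).hasDerivAt
  have hkey : ∀ r : ℝ,
      (-2) * (∫ u in (0:ℝ)..r, c u) - (2 * (∫ u in (0:ℝ)..r, b u) + Real.log (S r)) =
      0 - (0 + Real.log x) := by
    intro r
    have hD : ∀ u : ℝ, HasDerivAt
        (fun r => (-2) * (∫ u in (0:ℝ)..r, c u) - (2 * (∫ u in (0:ℝ)..r, b u) + Real.log (S r)))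
        0 u := by
      intro u
      have hSpos := hS.1 u
      have hlogS := (hS.2.2 u).log hSpos.ne'
      have hd := ((hΦc u).const_mul (-2)).sub (((hΦb u).const_mul 2).add hlogS)
      refine hd.congr_deriv (Eq.symm ?_)
      rw [hb, hc]
      show (0:ℝ) = -2 * (1 - 2 * ((1 - ρ) * S u ^ ρ + S u ^ (2*ρ)) / (1 + S u ^ ρ) ^ 2) -
        (2 * (1 - 2 * (1 + (1 - ρ) * S u ^ ρ) / (1 + S u ^ ρ) ^ 2) +
          -(8 * ρ * S u ^ (1 + ρ)) / (1 + S u ^ ρ) ^ 2 / S u)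
      have hYpos : (0:ℝ) < S u ^ ρ := Ypos hS u
      have h1 : (0:ℝ) < 1 + S u ^ ρ := by linarith
      have h2 : S u ^ (1 + ρ) = S u * S u ^ ρ := by
        rw [Real.rpow_add hSpos, Real.rpow_one]
      have h3 : S u ^ (2*ρ) = S u ^ ρ * S u ^ ρ := by
        rw [show (2:ℝ)*ρ = ρ+ρ by ring, Real.rpow_add hSpos]
      rw [h2, h3]
      field_simp
      ring
    have := is_const_of_deriv_eq_zero (fun u => (hD u).differentiableAt)
      (fun u => (hD u).deriv) r 0
    simpa [intervalIntegral.integral_same, hS.2.1] using this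
  have h4 : (-2) * (∫ u in (0:ℝ)..r, c u) =
      2 * (∫ u in (0:ℝ)..r, b u) + Real.log (S r) - Real.log x := by
    have := hkey r; linarith
  rw [gRho, fRho]
  show x * Real.exp ((-2) * ∫ u in (0:ℝ)..r, c u) = S r * Real.exp (2 * ∫ u in (0:ℝ)..r, b u)
  rw [h4, sub_eq_add_neg, Real.exp_add, Real.exp_add, Real.exp_neg,
    Real.exp_log (hS.1 r), Real.exp_log hx]
  field_simp

lemma gRho_eq (hρ : 0 < ρ) (hx : 0 < x) (hS : IsSsol ρ x S) (r : ℝ) :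
    gRho ρ x S r = Gk ρ (Y ρ S r) / Fk ρ (x ^ ρ) := by
  rw [gRho_eq_mul hρ hx hS r, fRho_eq hρ hx hS r, Gk, Fk]
  have hYpos := Ypos hS r
  have hSr' : S r = (Y ρ S r) ^ (ρ⁻¹) := by
    unfold Y
    rw [Real.rpow_rpow_inv (hS.1 r).le hρ.ne']
  rw [hSr']
  have hpow : (Y ρ S r) ^ (ρ⁻¹) * (Y ρ S r ^ (-(1/(2*ρ)))) = Y ρ S r ^ (1/(2*ρ)) := by
    rw [← Real.rpow_add hYpos]
    congr 1
    field_simp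
    ring
  rw [mul_div_assoc', ← mul_assoc, hpow]

lemma integrableOn_exp_mul_Iic {γ : ℝ} (hγ : 0 < γ) :
    IntegrableOn (fun u => Real.exp (γ * u)) (Iic (0:ℝ)) := by
  have h0 : Integrable ((Iic (0:ℝ)).indicator Real.exp) :=
    (integrableOn_exp_Iic 0).integrable_indicator measurableSet_Iic
  have h1 : Integrable (fun u => ((Iic (0:ℝ)).indicator Real.exp) (γ * u)) :=
    h0.comp_mul_left' hγ.ne'
  apply (h1.integrableOn (s := Iic 0)).congr_fun _ measurableSet_Iic
  intro u hu
  have : γ * u ∈ Iic (0:ℝ) := by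
    simp only [mem_Iic] at hu ⊢
    exact mul_nonpos_of_nonneg_of_nonpos hγ.le hu
  simp [indicator_of_mem this]

lemma integrable_of_expbounds {f : ℝ → ℝ} (hcont : Continuous f)
    (h₁ : ∃ C γ, 0 < γ ∧ ∀ u ≤ (0:ℝ), ‖f u‖ ≤ C * Real.exp (γ * u))
    (h₂ : ∃ C γ, 0 < γ ∧ ∀ u ≥ (0:ℝ), ‖f u‖ ≤ C * Real.exp (-γ * u)) :
    Integrable f := by
  obtain ⟨C₁, γ₁, hγ₁, hb₁⟩ := h₁
  obtain ⟨C₂, γ₂, hγ₂, hb₂⟩ := h₂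
  rw [← integrableOn_univ, ← Set.Iic_union_Ioi (a := (0:ℝ)), integrableOn_union]
  constructor
  · apply Integrable.mono' ((integrableOn_exp_mul_Iic hγ₁).const_mul C₁)
      hcont.aestronglyMeasurable.restrict
    rw [ae_restrict_iff' measurableSet_Iic]
    exact Eventually.of_forall fun u hu => hb₁ u hu
  · apply Integrable.mono' ((exp_neg_integrableOn_Ioi 0 hγ₂).const_mul C₂)
      hcont.aestronglyMeasurable.restrict
    rw [ae_restrict_iff' measurableSet_Ioi]
    exact Eventually.of_forall fun u hu => hb₂ u (le_of_lt hu)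

def kconst (a b : ℝ) : ℝ := Real.exp (-(a * (1 + Real.log (b / (2*a)))))

lemma kconst_pos (a b : ℝ) : 0 < kconst a b := Real.exp_pos _

lemma kernel_bound {a b : ℝ} (ha : 0 < a) (hb : 0 < b) {t : ℝ} (ht : 0 < t) :
    t ^ a * Real.exp (-(b*t)) ≤ kconst a b * Real.exp (-(b/2*t)) := by
  rw [Real.rpow_def_of_pos ht, kconst, ← Real.exp_add, ← Real.exp_add]
  apply Real.exp_le_exp.2
  have hc : (0:ℝ) < b/(2*a) := by positivity
  have h := Real.log_le_sub_one_of_pos (mul_pos hc ht)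
  rw [Real.log_mul hc.ne' ht.ne'] at h
  have h2 := mul_le_mul_of_nonneg_left h ha.le
  have h3 : a * (b/(2*a) * t) = b/2 * t := by field_simp
  nlinarith [h2, h3]

lemma contf (hρ : 0 < ρ) (hS : IsSsol ρ x S) : Continuous (fRho ρ S) := by
  unfold fRho
  apply Real.continuous_exp.comp
  apply continuous_const.mul
  exact continuous_iff_continuousAt.2 fun r =>
    (((contbF hρ hS).integral_hasStrictDerivAt 0 r).hasDerivAt).continuousAt

lemma contg (hρ : 0 < ρ) (hS : IsSsol ρ x S) : Continuous (gRho ρ x S) := by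
  unfold gRho
  apply continuous_const.mul
  apply Real.continuous_exp.comp
  apply continuous_const.mul
  exact continuous_iff_continuousAt.2 fun r =>
    (((contbG hρ hS).integral_hasStrictDerivAt 0 r).hasDerivAt).continuousAt

lemma fbound_pos (hρ : 0 < ρ) (hx : 0 < x) (hS : IsSsol ρ x S) :
    ∃ C γ, 0 < γ ∧ ∀ u ≥ (0:ℝ), ‖fRho ρ S u‖ ≤ C * Real.exp (-γ * u) := by
  have hxρ : (0:ℝ) < x ^ ρ := Real.rpow_pos_of_pos hx ρ
  have hA : 0 < Fk ρ (x ^ ρ) := Fk_pos hxρ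
  set a : ℝ := 1/(2*ρ) with ha
  set b : ℝ := 1/(4*ρ^2) with hb
  set c₁ : ℝ := 8 * ρ^2 / (1 + x^ρ)^2 with hc₁
  have hapos : 0 < a := by positivity
  have hbpos : 0 < b := by positivity
  have hcpos : 0 < c₁ := by positivity
  refine ⟨kconst a b * Real.exp (-(b/2) * (x^ρ)⁻¹) / Fk ρ (x^ρ), b/2 * c₁, by positivity, ?_⟩
  intro u hu
  have hY := Ypos hS u
  have hYinv := Yinv_lower hρ hx hS hu
  have hf := fRho_eq hρ hx hS u
  rw [Real.norm_eq_abs, abs_of_pos (by rw [fRho]; exact Real.exp_pos _), hf]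
  rw [div_le_iff₀ hA] at *
  calc Fk ρ (Y ρ S u)
      ≤ ((Y ρ S u)⁻¹) ^ a * Real.exp (-(b * (Y ρ S u)⁻¹)) := by
        rw [Fk]
        have hrw : Y ρ S u ^ (-(1/(2*ρ))) = ((Y ρ S u)⁻¹) ^ a := by
          rw [ha, Real.rpow_neg hY.le, ← Real.inv_rpow hY.le]
        rw [hrw]
        apply mul_le_mul_of_nonneg_left _ (by positivity)
        apply Real.exp_le_exp.2
        rw [hb, one_div (Y ρ S u)]
        rw [neg_div, neg_le_neg_iff]
        have heq : (Y ρ S u + (Y ρ S u)⁻¹)/(4*ρ^2)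
            = Y ρ S u/(4*ρ^2) + (1/(4*ρ^2)) * (Y ρ S u)⁻¹ := by ring
        have h5 : 0 ≤ Y ρ S u / (4*ρ^2) := by positivity
        rw [heq]
        linarith
    _ ≤ kconst a b * Real.exp (-(b/2 * (Y ρ S u)⁻¹)) := kernel_bound hapos hbpos (by positivity)
    _ ≤ kconst a b * Real.exp (-(b/2 * ((x^ρ)⁻¹ + c₁ * u))) := by
        apply mul_le_mul_of_nonneg_left _ (kconst_pos a b).le
        apply Real.exp_le_exp.2
        have := mul_le_mul_of_nonneg_left hYinv (show (0:ℝ) ≤ b/2 by positivity)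
        linarith
    _ = (kconst a b * Real.exp (-(b/2) * (x^ρ)⁻¹)) * Real.exp (-(b/2 * c₁) * u) := by
        rw [show -(b/2 * ((x^ρ)⁻¹ + c₁ * u)) = (-(b/2) * (x^ρ)⁻¹) + (-(b/2 * c₁) * u) by ring,
          Real.exp_add]
        ring
    _ = kconst a b * Real.exp (-(b/2) * (x^ρ)⁻¹) / Fk ρ (x^ρ) * Real.exp (-(b/2 * c₁) * u) * Fk ρ (x^ρ) := by
        field_simp

lemma fbound_neg (hρ : 0 < ρ) (hx : 0 < x) (hS : IsSsol ρ x S) :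
    ∃ C γ, 0 < γ ∧ ∀ u ≤ (0:ℝ), ‖fRho ρ S u‖ ≤ C * Real.exp (γ * u) := by
  have hxρ : (0:ℝ) < x ^ ρ := Real.rpow_pos_of_pos hx ρ
  have hA : 0 < Fk ρ (x ^ ρ) := Fk_pos hxρ
  set b : ℝ := 1/(4*ρ^2) with hb
  set c₂ : ℝ := 8 * ρ^2 * (x^ρ)^2 / (1 + x^ρ)^2 with hc₂
  have hbpos : 0 < b := by positivity
  have hcpos : 0 < c₂ := by positivity
  refine ⟨(x^ρ) ^ (-(1/(2*ρ))) * Real.exp (-(b * x^ρ)) / Fk ρ (x^ρ), b * c₂, by positivity, ?_⟩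
  intro u hu
  have hY := Ypos hS u
  have hYge : x ^ ρ + c₂ * (-u) ≤ Y ρ S u := Ylower hρ hx hS hu
  have hYge' : x ^ ρ ≤ Y ρ S u := by nlinarith
  rw [Real.norm_eq_abs, abs_of_pos (by rw [fRho]; exact Real.exp_pos _), fRho_eq hρ hx hS u]
  rw [div_le_iff₀ hA] at *
  calc Fk ρ (Y ρ S u)
      ≤ (Y ρ S u) ^ (-(1/(2*ρ))) * Real.exp (-(b * Y ρ S u)) := by
        rw [Fk]
        apply mul_le_mul_of_nonneg_left _ (by positivity)
        apply Real.exp_le_exp.2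
        rw [neg_div, neg_le_neg_iff, hb, one_div (Y ρ S u)]
        have heq : (Y ρ S u + (Y ρ S u)⁻¹)/(4*ρ^2)
            = 1/(4*ρ^2) * Y ρ S u + (Y ρ S u)⁻¹/(4*ρ^2) := by ring
        have h5 : 0 ≤ (Y ρ S u)⁻¹ / (4*ρ^2) := by positivity
        rw [heq]
        linarith
    _ ≤ (x^ρ) ^ (-(1/(2*ρ))) * Real.exp (-(b * Y ρ S u)) := by
        apply mul_le_mul_of_nonneg_right _ (Real.exp_pos _).le
        exact Real.rpow_le_rpow_of_nonpos hxρ hYge'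
          (neg_nonpos.mpr (by positivity))
    _ ≤ (x^ρ) ^ (-(1/(2*ρ))) * Real.exp (-(b * (x^ρ + c₂ * (-u)))) := by
        apply mul_le_mul_of_nonneg_left _ (by positivity)
        apply Real.exp_le_exp.2
        have := mul_le_mul_of_nonneg_left hYge hbpos.le
        linarith
    _ = ((x^ρ) ^ (-(1/(2*ρ))) * Real.exp (-(b * x^ρ))) * Real.exp ((b * c₂) * u) := by
        rw [show -(b * (x^ρ + c₂ * (-u))) = -(b * x^ρ) + (b * c₂) * u by ring, Real.exp_add]
        ring
    _ = (x^ρ) ^ (-(1/(2*ρ))) * Real.exp (-(b * x^ρ)) / Fk ρ (x^ρ) * Real.exp ((b * c₂) * u)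
        * Fk ρ (x^ρ) := by field_simp

lemma gbound_pos (hρ : 0 < ρ) (hx : 0 < x) (hS : IsSsol ρ x S) :
    ∃ C γ, 0 < γ ∧ ∀ u ≥ (0:ℝ), ‖gRho ρ x S u‖ ≤ C * Real.exp (-γ * u) := by
  have hxρ : (0:ℝ) < x ^ ρ := Real.rpow_pos_of_pos hx ρ
  have hA : 0 < Fk ρ (x ^ ρ) := Fk_pos hxρ
  set b : ℝ := 1/(4*ρ^2) with hb
  set c₁ : ℝ := 8 * ρ^2 / (1 + x^ρ)^2 with hc₁
  have hbpos : 0 < b := by positivity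
  have hcpos : 0 < c₁ := by positivity
  refine ⟨(x^ρ) ^ (1/(2*ρ)) * Real.exp (-(b * (x^ρ)⁻¹)) / Fk ρ (x^ρ), b * c₁, by positivity, ?_⟩
  intro u hu
  have hY := Ypos hS u
  have hYinv := Yinv_lower hρ hx hS hu
  have hYle : Y ρ S u ≤ x ^ ρ := Yupper hρ hS hu
  rw [Real.norm_eq_abs, abs_of_pos (by rw [gRho]; positivity), gRho_eq hρ hx hS u]
  rw [div_le_iff₀ hA] at *
  calc Gk ρ (Y ρ S u)
      ≤ (Y ρ S u) ^ (1/(2*ρ)) * Real.exp (-(b * (Y ρ S u)⁻¹)) := by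
        rw [Gk]
        apply mul_le_mul_of_nonneg_left _ (by positivity)
        apply Real.exp_le_exp.2
        rw [neg_div, neg_le_neg_iff, hb, one_div (Y ρ S u)]
        have heq : (Y ρ S u + (Y ρ S u)⁻¹)/(4*ρ^2)
            = Y ρ S u/(4*ρ^2) + 1/(4*ρ^2) * (Y ρ S u)⁻¹ := by ring
        have h5 : 0 ≤ Y ρ S u / (4*ρ^2) := by positivity
        rw [heq]
        linarith
    _ ≤ (x^ρ) ^ (1/(2*ρ)) * Real.exp (-(b * (Y ρ S u)⁻¹)) := by
        apply mul_le_mul_of_nonneg_right _ (Real.exp_pos _).le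
        exact Real.rpow_le_rpow hY.le hYle (by positivity)
    _ ≤ (x^ρ) ^ (1/(2*ρ)) * Real.exp (-(b * ((x^ρ)⁻¹ + c₁ * u))) := by
        apply mul_le_mul_of_nonneg_left _ (by positivity)
        apply Real.exp_le_exp.2
        have := mul_le_mul_of_nonneg_left hYinv hbpos.le
        linarith
    _ = ((x^ρ) ^ (1/(2*ρ)) * Real.exp (-(b * (x^ρ)⁻¹))) * Real.exp (-(b * c₁) * u) := by
        rw [show -(b * ((x^ρ)⁻¹ + c₁ * u)) = -(b * (x^ρ)⁻¹) + -(b * c₁) * u by ring, Real.exp_add]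
        ring
    _ = (x^ρ) ^ (1/(2*ρ)) * Real.exp (-(b * (x^ρ)⁻¹)) / Fk ρ (x^ρ) * Real.exp (-(b * c₁) * u)
        * Fk ρ (x^ρ) := by field_simp

lemma gbound_neg (hρ : 0 < ρ) (hx : 0 < x) (hS : IsSsol ρ x S) :
    ∃ C γ, 0 < γ ∧ ∀ u ≤ (0:ℝ), ‖gRho ρ x S u‖ ≤ C * Real.exp (γ * u) := by
  have hxρ : (0:ℝ) < x ^ ρ := Real.rpow_pos_of_pos hx ρ
  have hA : 0 < Fk ρ (x ^ ρ) := Fk_pos hxρ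
  set a : ℝ := 1/(2*ρ) with ha
  set b : ℝ := 1/(4*ρ^2) with hb
  set c₂ : ℝ := 8 * ρ^2 * (x^ρ)^2 / (1 + x^ρ)^2 with hc₂
  have hapos : 0 < a := by positivity
  have hbpos : 0 < b := by positivity
  have hcpos : 0 < c₂ := by positivity
  refine ⟨kconst a b * Real.exp (-(b/2) * x^ρ) / Fk ρ (x^ρ), b/2 * c₂, by positivity, ?_⟩
  intro u hu
  have hY := Ypos hS u
  have hYge : x ^ ρ + c₂ * (-u) ≤ Y ρ S u := Ylower hρ hx hS hu
  rw [Real.norm_eq_abs, abs_of_pos (by rw [gRho]; positivity), gRho_eq hρ hx hS u]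
  rw [div_le_iff₀ hA] at *
  calc Gk ρ (Y ρ S u)
      ≤ (Y ρ S u) ^ a * Real.exp (-(b * Y ρ S u)) := by
        rw [Gk]
        apply mul_le_mul_of_nonneg_left _ (by positivity)
        apply Real.exp_le_exp.2
        rw [neg_div, neg_le_neg_iff, hb, one_div (Y ρ S u)]
        have heq : (Y ρ S u + (Y ρ S u)⁻¹)/(4*ρ^2)
            = 1/(4*ρ^2) * Y ρ S u + (Y ρ S u)⁻¹/(4*ρ^2) := by ring
        have h5 : 0 ≤ (Y ρ S u)⁻¹ / (4*ρ^2) := by positivity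
        rw [heq]
        linarith
    _ ≤ kconst a b * Real.exp (-(b/2 * Y ρ S u)) := kernel_bound hapos hbpos hY
    _ ≤ kconst a b * Real.exp (-(b/2 * (x^ρ + c₂ * (-u)))) := by
        apply mul_le_mul_of_nonneg_left _ (kconst_pos a b).le
        apply Real.exp_le_exp.2
        have := mul_le_mul_of_nonneg_left hYge (show (0:ℝ) ≤ b/2 by positivity)
        linarith
    _ = (kconst a b * Real.exp (-(b/2) * x^ρ)) * Real.exp ((b/2 * c₂) * u) := by
        rw [show -(b/2 * (x^ρ + c₂ * (-u))) = -(b/2) * x^ρ + (b/2 * c₂) * u by ring, Real.exp_add]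
        ring
    _ = kconst a b * Real.exp (-(b/2) * x^ρ) / Fk ρ (x^ρ) * Real.exp ((b/2 * c₂) * u)
        * Fk ρ (x^ρ) := by field_simp

lemma integrable_fRho (hρ : 0 < ρ) (hx : 0 < x) (hS : IsSsol ρ x S) :
    Integrable (fRho ρ S) :=
  integrable_of_expbounds (contf hρ hS) (fbound_neg hρ hx hS) (fbound_pos hρ hx hS)

lemma integrable_gRho (hρ : 0 < ρ) (hx : 0 < x) (hS : IsSsol ρ x S) :
    Integrable (gRho ρ x S) :=
  integrable_of_expbounds (contg hρ hS) (gbound_neg hρ hx hS) (gbound_pos hρ hx hS)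

lemma Fk_inv (hρ : 0 < ρ) {t : ℝ} (ht : 0 < t) : Fk ρ t⁻¹ = Gk ρ t := by
  rw [Fk, Gk]
  congr 1
  · rw [Real.inv_rpow ht.le, Real.rpow_neg ht.le, inv_inv]
  · rw [one_div, inv_inv, one_div]
    ring_nf

lemma image_inv_Ioi : Inv.inv '' (Ioi (0:ℝ)) = Ioi (0:ℝ) := by
  ext t
  constructor
  · rintro ⟨s, hs, rfl⟩
    exact (inv_pos (a := s)).2 hs
  · intro ht
    exact ⟨t⁻¹, (inv_pos (a := t)).2 ht, inv_inv t⟩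

lemma change_var (hρ : 0 < ρ) (hx : 0 < x) (hS : IsSsol ρ x S) (k : ℝ → ℝ) :
    ∫ t in Ioi (0:ℝ), k t * (1+t)^2/(8*ρ^2*t^2) = ∫ u, k (Y ρ S u) := by
  have h := integral_image_eq_integral_abs_deriv_smul (s := univ) MeasurableSet.univ
    (fun u _ => (Yderiv hρ hS u).hasDerivWithinAt)
    ((Yanti hρ hS).injective.injOn) (fun t => k t * (1+t)^2/(8*ρ^2*t^2))
  rw [image_univ, ← image_univ, Yrange hρ hx hS] at h
  rw [h, setIntegral_univ]
  apply integral_congr_ae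
  apply Eventually.of_forall
  intro u
  have hY := Ypos hS u
  have h1 : (0:ℝ) < 1 + Y ρ S u := by linarith
  simp only [smul_eq_mul]
  rw [abs_div, abs_neg, abs_of_nonneg (by positivity), abs_of_nonneg (by positivity)]
  field_simp

lemma inv_symm_integral (hρ : 0 < ρ) :
    ∫ t in Ioi (0:ℝ), Fk ρ t * (1+t)^2/(8*ρ^2*t^2)
      = ∫ t in Ioi (0:ℝ), Gk ρ t * (1+t)^2/(8*ρ^2*t^2) := by
  have h := integral_image_eq_integral_abs_deriv_smul (s := Ioi (0:ℝ)) measurableSet_Ioi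
    (f := Inv.inv) (f' := fun t => -(t^2)⁻¹)
    (fun t ht => (hasDerivAt_inv (ne_of_gt ht)).hasDerivWithinAt)
    (fun a _ b _ h => inv_injective h) (fun t => Fk ρ t * (1+t)^2/(8*ρ^2*t^2))
  rw [image_inv_Ioi] at h
  rw [h]
  apply setIntegral_congr_fun measurableSet_Ioi
  intro t ht
  have ht' : (0:ℝ) < t := ht
  have h1 : (0:ℝ) < 1 + t := by linarith
  simp only [smul_eq_mul]
  rw [abs_neg, abs_of_nonneg (by positivity), Fk_inv hρ ht']
  field_simp
  ring

theorem integral_eq (hρ : 0 < ρ) (hx : 0 < x) (hS : IsSsol ρ x S) :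
    ∫ u, fRho ρ S u = ∫ u, gRho ρ x S u := by
  have hxρ : (0:ℝ) < x ^ ρ := Real.rpow_pos_of_pos hx ρ
  have hA : 0 < Fk ρ (x ^ ρ) := Fk_pos hxρ
  have hf : ∫ u, fRho ρ S u = (∫ u, Fk ρ (Y ρ S u)) / Fk ρ (x ^ ρ) := by
    rw [← integral_div]
    exact integral_congr_ae (Eventually.of_forall fun u => fRho_eq hρ hx hS u)
  have hg : ∫ u, gRho ρ x S u = (∫ u, Gk ρ (Y ρ S u)) / Fk ρ (x ^ ρ) := by
    rw [← integral_div]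
    exact integral_congr_ae (Eventually.of_forall fun u => gRho_eq hρ hx hS u)
  rw [hf, hg, ← change_var hρ hx hS (Fk ρ), ← change_var hρ hx hS (Gk ρ), inv_symm_integral hρ]

end Stmt12

theorem stmt12 (ρ x : ℝ) (hρ : 0 < ρ) (hx : 0 < x) (S : ℝ → ℝ) (hS : IsSsol ρ x S) :
    Integrable (fun u => fRho ρ S u) ∧
    Integrable (fun u => gRho ρ x S u) ∧
    ∫ u, fRho ρ S u = ∫ u, gRho ρ x S u :=
  ⟨Stmt12.integrable_fRho hρ hx hS, Stmt12.integrable_gRho hρ hx hS,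
    Stmt12.integral_eq hρ hx hS⟩
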